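/- The map φ from the group ⟨a,b,c,d ∣ acac⁻¹, adad⁻¹, bcb⁻¹c, bdb⁻¹d⟩ to the group ⟨a,b,c,d ∣ acac⁻¹, ada⁻¹d, bcbc⁻¹, bdb⁻¹d⁻¹⟩ defined on generators by φ(a)=d, φ(b)=ac, φ(c)=a, φ(d)=ab is a well-defined group homomorphism. -/

import Mathlib

namespace BMGroups

/-- Generators a, b, c, d of the free group on four letters. -/
def a : FreeGroup (Fin 4) := FreeGroup.of 0
def b : FreeGroup (Fin 4) := FreeGroup.of 1
def c : FreeGroup (Fin 4) := FreeGroup.of 2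
def d : FreeGroup (Fin 4) := FreeGroup.of 3

/-- Relators of Γ₄ = ⟨a,b,c,d ∣ acac⁻¹, adad⁻¹, bcbd, bc⁻¹bd⁻¹⟩. -/
def rels4 : Set (FreeGroup (Fin 4)) :=
  {a * c * a * c⁻¹, a * d * a * d⁻¹, b * c * b * d, b * c⁻¹ * b * d⁻¹}

/-- Relators of Γ₃₀ = ⟨a,b,c,d ∣ acad, ac⁻¹ad⁻¹, bcbd, bc⁻¹bd⁻¹⟩. -/
def rels30 : Set (FreeGroup (Fin 4)) :=
  {a * c * a * d, a * c⁻¹ * a * d⁻¹, b * c * b * d, b * c⁻¹ * b * d⁻¹}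

/-- Relators of Γ₅ = ⟨a,b,c,d ∣ acac⁻¹, adad⁻¹, bcb⁻¹c, bdb⁻¹d⟩. -/
def rels5 : Set (FreeGroup (Fin 4)) :=
  {a * c * a * c⁻¹, a * d * a * d⁻¹, b * c * b⁻¹ * c, b * d * b⁻¹ * d}

/-- Relators of Γ₁₀ = ⟨a,b,c,d ∣ acac⁻¹, ada⁻¹d, bcbc⁻¹, bdb⁻¹d⁻¹⟩. -/
def rels10 : Set (FreeGroup (Fin 4)) :=
  {a * c * a * c⁻¹, a * d * a⁻¹ * d, b * c * b * c⁻¹, b * d * b⁻¹ * d⁻¹}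

/-- The group Γ₄. -/
abbrev G4 := PresentedGroup rels4
/-- The group Γ₃₀. -/
abbrev G30 := PresentedGroup rels30
/-- The group Γ₅. -/
abbrev G5 := PresentedGroup rels5
/-- The group Γ₁₀. -/
abbrev G10 := PresentedGroup rels10

/-- The images of the generators a,b,c,d in a presented group. -/
def gen {rels : Set (FreeGroup (Fin 4))} (i : Fin 4) : PresentedGroup rels :=
  PresentedGroup.of i

lemma rel_one {rels : Set (FreeGroup (Fin 4))} {r : FreeGroup (Fin 4)} (h : r ∈ rels) :
    (QuotientGroup.mk r : PresentedGroup rels) = 1 := by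
  rw [QuotientGroup.eq_one_iff]
  exact Subgroup.subset_normalClosure h

/-- φ : Γ₅ → Γ₁₀, a ↦ d, b ↦ ac, c ↦ a, d ↦ ab, is a well-defined
group homomorphism. -/
theorem phi_well_defined :
    ∃ φ : G5 →* G10,
      φ (gen 0) = gen 3 ∧
      φ (gen 1) = gen 0 * gen 2 ∧
      φ (gen 2) = gen 0 ∧
      φ (gen 3) = gen 0 * gen 1 := by
  set f : Fin 4 → G10 := ![gen 3, gen 0 * gen 2, gen 0, gen 0 * gen 1] with hf
  have h1 : (gen 0 : G10) * gen 2 * gen 0 * (gen 2)⁻¹ = 1 := by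
    have := rel_one (rels := rels10) (show a*c*a*c⁻¹ ∈ rels10 by left; rfl)
    exact this
  have h2 : (gen 0 : G10) * gen 3 * (gen 0)⁻¹ * gen 3 = 1 := by
    have := rel_one (rels := rels10) (show a*d*a⁻¹*d ∈ rels10 by right; left; rfl)
    exact this
  have h3 : (gen 1 : G10) * gen 2 * gen 1 * (gen 2)⁻¹ = 1 := by
    have := rel_one (rels := rels10) (show b*c*b*c⁻¹ ∈ rels10 by right; right; left; rfl)
    exact this
  have h4 : (gen 1 : G10) * gen 3 * (gen 1)⁻¹ * (gen 3)⁻¹ = 1 := by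
    have := rel_one (rels := rels10) (show b*d*b⁻¹*d⁻¹ ∈ rels10 by right; right; right; rfl)
    exact this
  have k2 : (gen 0 : G10) * gen 3 * (gen 0)⁻¹ = (gen 3)⁻¹ :=
    eq_inv_of_mul_eq_one_left h2
  have k4 : (gen 1 : G10) * gen 3 * (gen 1)⁻¹ = gen 3 := by
    have := eq_inv_of_mul_eq_one_left h4; simpa using this
  have k3 : (gen 1 : G10) * gen 2 * gen 1 = gen 2 := by
    have := eq_inv_of_mul_eq_one_left h3; simpa using this
  have hinv : (gen 1 : G10)⁻¹ * (gen 2)⁻¹ * (gen 1)⁻¹ = (gen 2)⁻¹ := by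
    have := congrArg Inv.inv k3
    simpa [mul_inv_rev, mul_assoc] using this
  have k3' : (gen 1 : G10) * (gen 2)⁻¹ * gen 1 = (gen 2)⁻¹ := by
    conv_lhs => rw [← hinv]
    group
  have gda : (gen 3 : G10) * gen 0 * gen 3 * (gen 0)⁻¹ = 1 := by
    calc (gen 3 : G10) * gen 0 * gen 3 * (gen 0)⁻¹
        = gen 3 * (gen 0 * gen 3 * (gen 0)⁻¹) := by group
      _ = gen 3 * (gen 3)⁻¹ := by rw [k2]
      _ = 1 := by group
  refine ⟨PresentedGroup.toGroup (f := f) ?_, ?_, ?_, ?_, ?_⟩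
  · rintro r (rfl | rfl | rfl | rfl) <;>
      simp only [a, b, c, d, map_mul, map_inv, FreeGroup.lift_apply_of, hf,
        Matrix.cons_val_zero, Matrix.cons_val_one, Matrix.head_cons,
        Matrix.cons_val_two, Matrix.cons_val_three, Matrix.tail_cons]
    · exact gda
    · calc (gen 3 : G10) * (gen 0 * gen 1) * gen 3 * (gen 0 * gen 1)⁻¹
          = gen 3 * gen 0 * (gen 1 * gen 3 * (gen 1)⁻¹) * (gen 0)⁻¹ := by group
        _ = gen 3 * gen 0 * gen 3 * (gen 0)⁻¹ := by rw [k4]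
        _ = 1 := gda
    · calc (gen 0 : G10) * gen 2 * gen 0 * (gen 0 * gen 2)⁻¹ * gen 0
          = gen 0 * gen 2 * gen 0 * (gen 2)⁻¹ := by group
        _ = 1 := h1
    · calc (gen 0 : G10) * gen 2 * (gen 0 * gen 1) * (gen 0 * gen 2)⁻¹ * (gen 0 * gen 1)
          = gen 0 * gen 2 * gen 0 * (gen 1 * (gen 2)⁻¹ * gen 1) := by group
        _ = gen 0 * gen 2 * gen 0 * (gen 2)⁻¹ := by rw [k3']
        _ = 1 := h1
  all_goals
    simp [gen, PresentedGroup.toGroup.of, hf]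

end BMGroups
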